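/- Let Γ be a label cover instance with k right super-nodes and q left super-nodes. If MaxCover(Γ) ≤ ε for some ε > 0, then MinLabel(Γ) ≥ (1/ε)^{1/k} · k. -/

import Mathlib

open Finset

/-- Label cover: left vertices `U` partitioned by `pu` into `q` super-nodes,
right vertices `W` partitioned by `pw` into `k` nonempty super-nodes, edges `E`.
If every labeling `S` (one vertex `S j` from each right super-node `W j`) covers
at most an `ε` fraction of left super-nodes, then every multi-labeling
`Shat ⊆ W` covering all left super-nodes has size at least `(1/ε)^{1/k} · k`. -/
theorem maxcover_le_imp_minlabel_ge (q k : ℕ) (hq : 0 < q) (hk : 0 < k)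
    (U W : Type) [Fintype U] [Fintype W]
    (pu : U → Fin q) (pw : W → Fin k) (E : U → W → Prop)
    [∀ u w, Decidable (E u w)]
    (hW : ∀ j : Fin k, ∃ w : W, pw w = j)
    (ε : ℝ) (hε : 0 < ε)
    (hmax : ∀ S : Fin k → W, (∀ j, pw (S j) = j) →
      ((Finset.univ.filter fun i : Fin q =>
          ∃ u, pu u = i ∧ ∀ j, E u (S j)).card : ℝ) / q ≤ ε)
    (Shat : Finset W)
    (hcov : ∀ i : Fin q, ∃ u, pu u = i ∧
        ∀ j : Fin k, ∃ w ∈ Shat, pw w = j ∧ E u w) :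
    (1 / ε) ^ ((1 : ℝ) / k) * k ≤ (Shat.card : ℝ) := by
  classical
  set T : Fin k → Finset W := fun j => Shat.filter (fun w => pw w = j) with hTdef
  have hqpos : (0:ℝ) < q := by exact_mod_cast hq
  have hkpos : (0:ℝ) < k := by exact_mod_cast hk
  -- counting: q ≤ ∑ over labelings S ∈ piFinset T of # covered super-nodes
  have h1 : (q : ℕ) ≤ ∑ S ∈ Fintype.piFinset T,
      (Finset.univ.filter fun i : Fin q => ∃ u, pu u = i ∧ ∀ j, E u (S j)).card := by
    have := Finset.sum_comm (s := Fintype.piFinset T) (t := Finset.univ)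
      (f := fun S (i : Fin q) => if ∃ u, pu u = i ∧ ∀ j, E u (S j) then 1 else 0)
    calc (q : ℕ) = ∑ i : Fin q, 1 := by simp
    _ ≤ ∑ i : Fin q, ∑ S ∈ Fintype.piFinset T,
          (if ∃ u, pu u = i ∧ ∀ j, E u (S j) then 1 else 0) := by
        apply Finset.sum_le_sum
        intro i _
        obtain ⟨u, hu, hju⟩ := hcov i
        choose f hf1 hf2 hf3 using hju
        have hmem : f ∈ Fintype.piFinset T := by
          simp only [Fintype.mem_piFinset, hTdef, Finset.mem_filter]
          exact fun j => ⟨hf1 j, hf2 j⟩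
        have : (if ∃ u', pu u' = i ∧ ∀ j, E u' (f j) then 1 else 0) = 1 := by
          rw [if_pos ⟨u, hu, hf3⟩]
        calc 1 = (if ∃ u', pu u' = i ∧ ∀ j, E u' (f j) then 1 else 0) := this.symm
        _ ≤ _ := Finset.single_le_sum (f := fun S =>
              (if ∃ u', pu u' = i ∧ ∀ j, E u' (S j) then 1 else 0))
              (fun _ _ => by positivity) hmem
    _ = ∑ S ∈ Fintype.piFinset T, ∑ i : Fin q,
          (if ∃ u, pu u = i ∧ ∀ j, E u (S j) then 1 else 0) := (Finset.sum_comm)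
    _ = _ := Finset.sum_congr rfl (fun S _ => (Finset.card_filter _ _).symm)
  -- each term is at most ε * q
  have h2 : ∀ S ∈ Fintype.piFinset T,
      ((Finset.univ.filter fun i : Fin q => ∃ u, pu u = i ∧ ∀ j, E u (S j)).card : ℝ)
        ≤ ε * q := by
    intro S hS
    have hSj : ∀ j, pw (S j) = j := by
      intro j
      exact (Finset.mem_filter.1 (Fintype.mem_piFinset.1 hS j)).2
    have := hmax S hSj
    rwa [div_le_iff₀ hqpos] at this
  -- 1/ε ≤ ∏ (T j).card
  have key : (1:ℝ)/ε ≤ ∏ j, ((T j).card : ℝ) := by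
    have hle : (q : ℝ) ≤ (∏ j, ((T j).card : ℝ)) * (ε * q) := by
      calc (q : ℝ) ≤ ∑ S ∈ Fintype.piFinset T,
          ((Finset.univ.filter fun i : Fin q => ∃ u, pu u = i ∧ ∀ j, E u (S j)).card : ℝ) := by
            exact_mod_cast h1
      _ ≤ ∑ _S ∈ Fintype.piFinset T, (ε * q) := Finset.sum_le_sum h2
      _ = (∏ j, ((T j).card : ℝ)) * (ε * q) := by
            rw [Finset.sum_const, nsmul_eq_mul]
            congr 1
            rw [Fintype.card_piFinset]
            push_cast
            rfl
    rw [div_le_iff₀ hε]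
    calc (1:ℝ) = q / q := by field_simp
    _ ≤ ((∏ j, ((T j).card : ℝ)) * (ε * q)) / q := by
        gcongr
    _ = (∏ j, ((T j).card : ℝ)) * ε := by rw [mul_div_assoc, mul_div_assoc, div_self hqpos.ne', mul_one]
  -- nonemptiness and nonnegativity
  have hTnn : ∀ j ∈ (Finset.univ : Finset (Fin k)), (0:ℝ) ≤ ((T j).card : ℝ) :=
    fun j _ => by positivity
  -- card decomposition
  have hcard : (Shat.card : ℝ) = ∑ j, ((T j).card : ℝ) := by
    have := Finset.card_eq_sum_card_fiberwise
      (s := Shat) (t := (Finset.univ : Finset (Fin k))) (f := pw)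
      (fun w _ => Finset.mem_univ (pw w))
    rw [this]
    push_cast
    rfl
  -- AM-GM
  have hw' : ∑ _j : Fin k, (1:ℝ)/k = 1 := by
    rw [Finset.sum_const, nsmul_eq_mul]
    field_simp
    simp
  have amgm := Real.geom_mean_le_arith_mean_weighted Finset.univ
    (fun _ => (1:ℝ)/k) (fun j => ((T j).card : ℝ)) (fun _ _ => by positivity) hw' hTnn
  have hprodpow : (∏ j, ((T j).card : ℝ)) ^ ((1:ℝ)/k) = ∏ j, ((T j).card : ℝ) ^ ((1:ℝ)/k) :=
    (Real.finset_prod_rpow _ _ hTnn _).symm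
  have h3 : (1/ε) ^ ((1:ℝ)/k) ≤ (∏ j, ((T j).card : ℝ)) ^ ((1:ℝ)/k) :=
    Real.rpow_le_rpow (by positivity) key (by positivity)
  have h4 : (∏ j, ((T j).card : ℝ)) ^ ((1:ℝ)/k) ≤ (Shat.card : ℝ) / k := by
    rw [hprodpow, hcard]
    calc ∏ j, ((T j).card : ℝ) ^ ((1:ℝ)/k) ≤ ∑ j, (1:ℝ)/k * ((T j).card : ℝ) := amgm
    _ = (∑ j, ((T j).card : ℝ)) / k := by
        rw [Finset.sum_div]
        congr 1; ext j; ring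
  have := h3.trans h4
  calc (1/ε) ^ ((1:ℝ)/k) * k ≤ ((Shat.card : ℝ) / k) * k := by
        apply mul_le_mul_of_nonneg_right this (le_of_lt hkpos)
  _ = (Shat.card : ℝ) := by field_simp
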